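/- Let 0 < s₁ ≤ s₂ and 0 < α ≤ s₁/s₂. With I₁, I₂ the Poisson mutual information functions (gains α, 1; dark currents s₁, s₂), the function I₂ − I₁ is concave on [0,1]. -/

import Mathlib

open Real Set

private lemma poisson_hd1 (s : ℝ) {x : ℝ} (hxs : 0 < x + s) :
    HasDerivAt (fun q : ℝ => -(q + s) * Real.log (q + s) + q * (1 + s) * Real.log (1 + s)
      + (1 - q) * s * Real.log s)
      (-(Real.log (x + s) + 1) + (1 + s) * Real.log (1 + s) - s * Real.log s) x := by
  have hne : x + s ≠ 0 := ne_of_gt hxs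
  have h1 : HasDerivAt (fun q : ℝ => (q + s) * Real.log (q + s)) (Real.log (x + s) + 1) x := by
    have := (Real.hasDerivAt_mul_log hne).comp x ((hasDerivAt_id x).add_const s)
    simp only [mul_one] at this
    exact this
  have h2 : HasDerivAt (fun q : ℝ => q * ((1 + s) * Real.log (1 + s)))
      ((1 + s) * Real.log (1 + s)) x := by
    simpa using (hasDerivAt_id x).mul_const ((1 + s) * Real.log (1 + s))
  have h3 : HasDerivAt (fun q : ℝ => (1 - q) * (s * Real.log s))
      ((0 - 1) * (s * Real.log s)) x :=
    ((hasDerivAt_const x (1:ℝ)).sub (hasDerivAt_id x)).mul_const (s * Real.log s)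
  have H := (h1.neg.add h2).add h3
  have hfe : (fun q : ℝ => -(q + s) * Real.log (q + s) + q * (1 + s) * Real.log (1 + s)
      + (1 - q) * s * Real.log s)
      = (fun q : ℝ => -((q + s) * Real.log (q + s)) + q * ((1 + s) * Real.log (1 + s))
      + (1 - q) * (s * Real.log s)) := by
    funext q; ring
  rw [hfe]
  exact H.congr_deriv (by ring)

private lemma poisson_hd2 (s : ℝ) {x : ℝ} (hxs : 0 < x + s) :
    HasDerivAt (fun q : ℝ =>
      -(Real.log (q + s) + 1) + (1 + s) * Real.log (1 + s) - s * Real.log s)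
      (-(x + s)⁻¹) x := by
  have hne : x + s ≠ 0 := ne_of_gt hxs
  have h1 : HasDerivAt (fun q : ℝ => Real.log (q + s)) ((x + s)⁻¹) x := by
    have := (Real.hasDerivAt_log hne).comp x ((hasDerivAt_id x).add_const s)
    simp only [mul_one] at this
    exact this
  have H := (((h1.add_const 1).neg).add_const ((1 + s) * Real.log (1 + s))).sub_const
    (s * Real.log s)
  exact H

theorem less_noisy_concave' (s₁ s₂ α : ℝ) (h1 : 0 < s₁) (h12 : s₁ ≤ s₂)
    (hα0 : 0 < α) (hα : α ≤ s₁ / s₂) :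
    ConcaveOn ℝ (Icc (0:ℝ) 1) (fun q : ℝ =>
      (-(q + s₂) * Real.log (q + s₂) + q * (1 + s₂) * Real.log (1 + s₂)
        + (1 - q) * s₂ * Real.log s₂)
      - α * (-(q + s₁) * Real.log (q + s₁) + q * (1 + s₁) * Real.log (1 + s₁)
        + (1 - q) * s₁ * Real.log s₁)) := by
  have h2 : (0:ℝ) < s₂ := lt_of_lt_of_le h1 h12
  set f : ℝ → ℝ := fun q =>
      (-(q + s₂) * Real.log (q + s₂) + q * (1 + s₂) * Real.log (1 + s₂)
        + (1 - q) * s₂ * Real.log s₂)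
      - α * (-(q + s₁) * Real.log (q + s₁) + q * (1 + s₁) * Real.log (1 + s₁)
        + (1 - q) * s₁ * Real.log s₁) with hf
  set F : ℝ → ℝ := fun q =>
      (-(Real.log (q + s₂) + 1) + (1 + s₂) * Real.log (1 + s₂) - s₂ * Real.log s₂)
      - α * (-(Real.log (q + s₁) + 1) + (1 + s₁) * Real.log (1 + s₁) - s₁ * Real.log s₁)
    with hF
  -- derivatives on the open set U = Ioi (-s₁)
  have hU : ∀ x ∈ Ioi (-s₁), 0 < x + s₁ ∧ 0 < x + s₂ := by
    intro x hx
    constructor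
    · linarith [mem_Ioi.mp hx]
    · linarith [mem_Ioi.mp hx]
  have hdf : ∀ x ∈ Ioi (-s₁), HasDerivAt f (F x) x := by
    intro x hx
    obtain ⟨hx1, hx2⟩ := hU x hx
    exact (poisson_hd1 s₂ hx2).sub ((poisson_hd1 s₁ hx1).const_mul α)
  have hdF : ∀ x ∈ Ioi (-s₁), HasDerivAt F (-(x + s₂)⁻¹ - α * (-(x + s₁)⁻¹)) x := by
    intro x hx
    obtain ⟨hx1, hx2⟩ := hU x hx
    exact (poisson_hd2 s₂ hx2).sub ((poisson_hd2 s₁ hx1).const_mul α)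
  have hopen : IsOpen (Ioi (-s₁)) := isOpen_Ioi
  have hderiv_eq : ∀ x ∈ Ioi (-s₁), deriv f x = F x := fun x hx => (hdf x hx).deriv
  have hsub : Icc (0:ℝ) 1 ⊆ Ioi (-s₁) := by
    intro x hx
    have := hx.1
    simp only [mem_Ioi]
    linarith
  apply concaveOn_of_deriv2_nonpos (convex_Icc 0 1)
  · -- continuity
    intro x hx
    exact ((hdf x (hsub hx)).differentiableAt.continuousAt).continuousWithinAt
  · -- differentiable on interior
    intro x hx
    rw [interior_Icc] at hx
    exact (hdf x (hsub (Ioo_subset_Icc_self hx))).differentiableAt.differentiableWithinAt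
  · -- deriv f differentiable on interior
    intro x hx
    rw [interior_Icc] at hx
    have hxU : x ∈ Ioi (-s₁) := hsub (Ioo_subset_Icc_self hx)
    have : DifferentiableAt ℝ (deriv f) x := by
      have heq : deriv f =ᶠ[nhds x] F :=
        Filter.eventuallyEq_of_mem (hopen.mem_nhds hxU) hderiv_eq
      exact (hdF x hxU).differentiableAt.congr_of_eventuallyEq heq
    exact this.differentiableWithinAt
  · -- second derivative nonpositive
    intro x hx
    rw [interior_Icc] at hx
    have hxU : x ∈ Ioi (-s₁) := hsub (Ioo_subset_Icc_self hx)
    obtain ⟨hx1, hx2⟩ := hU x hxU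
    have heq : deriv f =ᶠ[nhds x] F :=
      Filter.eventuallyEq_of_mem (hopen.mem_nhds hxU) hderiv_eq
    have h2nd : deriv (deriv f) x = -(x + s₂)⁻¹ - α * (-(x + s₁)⁻¹) := by
      rw [heq.deriv_eq]
      exact (hdF x hxU).deriv
    have : deriv^[2] f x = -(x + s₂)⁻¹ - α * (-(x + s₁)⁻¹) := by
      simpa [Function.iterate_succ, Function.comp] using h2nd
    rw [this]
    -- show -(x+s₂)⁻¹ + α*(x+s₁)⁻¹ ≤ 0
    have hkey : α * (x + s₂) ≤ x + s₁ := by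
      have hαs : α * s₂ ≤ s₁ := (le_div_iff₀ h2).mp hα
      have hα1 : α ≤ 1 := le_trans hα (div_le_one_of_le₀ h12 (le_of_lt h2))
      nlinarith [hx.1.le]
    have hpos1 : (0:ℝ) < x + s₁ := hx1
    have hpos2 : (0:ℝ) < x + s₂ := hx2
    have : α * (x + s₁)⁻¹ ≤ (x + s₂)⁻¹ := by
      rw [show (x + s₁)⁻¹ = 1 / (x + s₁) by ring, show (x + s₂)⁻¹ = 1 / (x + s₂) by ring,
        mul_one_div, div_le_div_iff₀ hpos1 hpos2]
      linarith [hkey]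
    linarith [this]
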